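/- arXiv:1802.04923 — 2 statements merged into one kernel-verified Lean document; each statement's English description precedes it below -/
import Mathlib

section
/- (Proposition 2, part (a)) Let M ≥ 1, let b ∈ ℂ^M have |b_k| = 1 for all k, and let x* ∈ X maximize |Σ_{k=1}^{M} conj(b_k)·x_k| over all x ∈ X. If φ* = arg(Σ_{k=1}^{M} conj(b_k)·x*_k) is nondegenerate, then x* = x(φ*); in particular the maximizer belongs to the set X̃ = {x(φ) : φ nondegenerate}. -/
/-- `sgn t = 1` if `t > 0` and `-1` otherwise. -/
noncomputable def sgn (t : ℝ) : ℝ := if 0 < t then 1 else -1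

/-- One-bit complex sign: `sign(c) = sgn(Re c) + i·sgn(Im c)`. -/
noncomputable def csign (c : ℂ) : ℂ := (sgn c.re : ℂ) + (sgn c.im : ℂ) * Complex.I

/-- `φ` is nondegenerate for `b` if `Re(b_k e^{iφ}) ≠ 0` and `Im(b_k e^{iφ}) ≠ 0` for all `k`. -/
def Nondeg {M : ℕ} (b : Fin M → ℂ) (φ : ℝ) : Prop :=
  ∀ k, (b k * Complex.exp (φ * Complex.I)).re ≠ 0 ∧
    (b k * Complex.exp (φ * Complex.I)).im ≠ 0

/-- The one-bit beamforming vector `x(φ)_k = (1/√2)·sign(b_k e^{iφ})`. -/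
noncomputable def xphi {M : ℕ} (b : Fin M → ℂ) (φ : ℝ) : Fin M → ℂ :=
  fun k => ((1 / Real.sqrt 2 : ℝ) : ℂ) * csign (b k * Complex.exp (φ * Complex.I))

/-- The one-bit alphabet `X = {x : x_k ∈ {(±1 ± i)/√2} for all k}`. -/
noncomputable def oneBit (M : ℕ) : Set (Fin M → ℂ) :=
  {x | ∀ k, x k ∈ ({(1 + Complex.I) / Real.sqrt 2, (1 - Complex.I) / Real.sqrt 2,
    (-1 + Complex.I) / Real.sqrt 2, (-1 - Complex.I) / Real.sqrt 2} : Set ℂ)}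

lemma sgn_cases (t : ℝ) : sgn t = 1 ∨ sgn t = -1 := by
  unfold sgn; split <;> simp

lemma mul_sgn_eq_abs (a : ℝ) : a * sgn a = |a| := by
  unfold sgn
  rcases lt_trichotomy a 0 with h|h|h
  · rw [if_neg (by linarith), abs_of_neg h]; ring
  · simp [h]
  · rw [if_pos h, abs_of_pos h]; ring

lemma mul_le_abs' (a s : ℝ) (hs : s = 1 ∨ s = -1) : a * s ≤ |a| := by
  rcases hs with h | h <;> subst h
  · simpa using le_abs_self a
  · simpa using neg_le_abs a

lemma mul_lt_abs (a s : ℝ) (ha : a ≠ 0) (hs : s = 1 ∨ s = -1) (hne : s ≠ sgn a) :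
    a * s < |a| := by
  unfold sgn at hne
  rcases lt_or_gt_of_ne ha with h1 | h1
  · rw [if_neg (not_lt.mpr h1.le)] at hne
    have hs1 : s = 1 := by
      rcases hs with h|h
      · exact h
      · exact absurd h hne
    rw [hs1, abs_of_neg h1]; linarith
  · rw [if_pos h1] at hne
    have hs1 : s = -1 := by
      rcases hs with h|h
      · exact absurd h hne
      · exact h
    rw [hs1, abs_of_pos h1]; linarith

lemma re_conj_mul (c : ℂ) (s t : ℝ) :
    ((starRingEnd ℂ) c * (((s:ℂ) + (t:ℂ) * Complex.I) / (Real.sqrt 2 : ℝ))).re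
      = (c.re * s + c.im * t) / Real.sqrt 2 := by
  simp [Complex.mul_re, Complex.div_ofReal_re, Complex.div_ofReal_im]
  ring

lemma xphi_form (c : ℂ) :
    ((1 / Real.sqrt 2 : ℝ) : ℂ) * csign c
      = (((sgn c.re : ℝ):ℂ) + ((sgn c.im : ℝ):ℂ) * Complex.I) / (Real.sqrt 2 : ℝ) := by
  unfold csign; push_cast; ring

lemma mem_alphabet (x : ℂ)
    (hx : x ∈ ({(1 + Complex.I) / Real.sqrt 2, (1 - Complex.I) / Real.sqrt 2,
      (-1 + Complex.I) / Real.sqrt 2, (-1 - Complex.I) / Real.sqrt 2} : Set ℂ)) :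
    ∃ s t : ℝ, (s = 1 ∨ s = -1) ∧ (t = 1 ∨ t = -1) ∧
      x = ((s:ℂ) + (t:ℂ) * Complex.I) / (Real.sqrt 2 : ℝ) := by
  simp only [Set.mem_insert_iff, Set.mem_singleton_iff] at hx
  rcases hx with h|h|h|h
  · exact ⟨1, 1, Or.inl rfl, Or.inl rfl, by rw [h]; push_cast; ring⟩
  · exact ⟨1, -1, Or.inl rfl, Or.inr rfl, by rw [h]; push_cast; ring⟩
  · exact ⟨-1, 1, Or.inr rfl, Or.inl rfl, by rw [h]; push_cast; ring⟩
  · exact ⟨-1, -1, Or.inr rfl, Or.inr rfl, by rw [h]; push_cast; ring⟩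

lemma key_le (c x : ℂ)
    (hx : x ∈ ({(1 + Complex.I) / Real.sqrt 2, (1 - Complex.I) / Real.sqrt 2,
      (-1 + Complex.I) / Real.sqrt 2, (-1 - Complex.I) / Real.sqrt 2} : Set ℂ)) :
    ((starRingEnd ℂ) c * x).re
      ≤ ((starRingEnd ℂ) c * (((1 / Real.sqrt 2 : ℝ) : ℂ) * csign c)).re := by
  obtain ⟨s, t, hs, ht, rfl⟩ := mem_alphabet x hx
  rw [xphi_form, re_conj_mul, re_conj_mul, mul_sgn_eq_abs, mul_sgn_eq_abs]
  have h2 : (0:ℝ) < Real.sqrt 2 := by positivity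
  have ha := mul_le_abs' c.re s hs
  have hb := mul_le_abs' c.im t ht
  gcongr

lemma key_lt (c x : ℂ) (hre : c.re ≠ 0) (him : c.im ≠ 0)
    (hx : x ∈ ({(1 + Complex.I) / Real.sqrt 2, (1 - Complex.I) / Real.sqrt 2,
      (-1 + Complex.I) / Real.sqrt 2, (-1 - Complex.I) / Real.sqrt 2} : Set ℂ))
    (hne : x ≠ ((1 / Real.sqrt 2 : ℝ) : ℂ) * csign c) :
    ((starRingEnd ℂ) c * x).re
      < ((starRingEnd ℂ) c * (((1 / Real.sqrt 2 : ℝ) : ℂ) * csign c)).re := by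
  obtain ⟨s, t, hs, ht, rfl⟩ := mem_alphabet x hx
  rw [xphi_form] at hne ⊢
  rw [re_conj_mul, re_conj_mul, mul_sgn_eq_abs, mul_sgn_eq_abs]
  have hst : s ≠ sgn c.re ∨ t ≠ sgn c.im := by
    by_contra h
    push_neg at h
    exact hne (by rw [h.1, h.2])
  have h2 : (0:ℝ) < Real.sqrt 2 := by positivity
  have ha := mul_le_abs' c.re s hs
  have hb := mul_le_abs' c.im t ht
  rw [div_lt_div_iff₀ h2 h2]
  rcases hst with h|h
  · have := mul_lt_abs c.re s hre hs h
    nlinarith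
  · have := mul_lt_abs c.im t him ht h
    nlinarith

lemma xphi_mem {M : ℕ} (b : Fin M → ℂ) (φ : ℝ) : xphi b φ ∈ oneBit M := by
  intro k
  show ((1 / Real.sqrt 2 : ℝ) : ℂ) * csign (b k * Complex.exp (φ * Complex.I)) ∈ _
  rw [xphi_form]
  rcases sgn_cases (b k * Complex.exp (φ * Complex.I)).re with h|h <;>
    rcases sgn_cases (b k * Complex.exp (φ * Complex.I)).im with h'|h' <;>
      rw [h, h'] <;> simp only [Set.mem_insert_iff, Set.mem_singleton_iff] <;> push_cast
  · left; ring
  · right; left; ring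
  · right; right; left; ring
  · right; right; right; ring

/-- **Proposition 2, part (a).** If `x* ∈ X` maximizes `|Σ_k conj(b_k)·x_k|` over `X`
and `φ* = arg(Σ_k conj(b_k)·x*_k)` is nondegenerate, then `x* = x(φ*)`; in particular
the maximizer belongs to `X̃ = {x(φ) : φ nondegenerate}`. -/
theorem maximizer_is_phase_aligned (M : ℕ) (hM : 1 ≤ M) (b : Fin M → ℂ)
    (hb : ∀ k, ‖b k‖ = 1) (xs : Fin M → ℂ) (hxs : xs ∈ oneBit M)
    (hmax : ∀ x ∈ oneBit M, ‖∑ k, (starRingEnd ℂ) (b k) * x k‖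
      ≤ ‖∑ k, (starRingEnd ℂ) (b k) * xs k‖)
    (hnd : Nondeg b (∑ k, (starRingEnd ℂ) (b k) * xs k).arg) :
    xs = xphi b (∑ k, (starRingEnd ℂ) (b k) * xs k).arg ∧
      xs ∈ {x : Fin M → ℂ | ∃ φ : ℝ, Nondeg b φ ∧ x = xphi b φ} := by
  set S : ℂ := ∑ k, (starRingEnd ℂ) (b k) * xs k with hSdef
  set φ : ℝ := S.arg with hφ
  have hconj : ∀ k, (starRingEnd ℂ) (b k) * Complex.exp (-((φ:ℂ) * Complex.I))
      = (starRingEnd ℂ) (b k * Complex.exp ((φ:ℂ) * Complex.I)) := by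
    intro k
    rw [map_mul, ← Complex.exp_conj]
    congr 1
    simp [Complex.conj_I]
  have hsum : ∀ x : Fin M → ℂ,
      ((∑ k, (starRingEnd ℂ) (b k) * x k) * Complex.exp (-((φ:ℂ) * Complex.I))).re
        = ∑ k, ((starRingEnd ℂ) (b k * Complex.exp ((φ:ℂ) * Complex.I)) * x k).re := by
    intro x
    rw [Finset.sum_mul, Complex.re_sum]
    refine Finset.sum_congr rfl fun k _ => ?_
    rw [← hconj k]
    congr 1
    ring
  have habs : ((‖S‖ : ℝ) : ℂ) = S * Complex.exp (-((φ:ℂ) * Complex.I)) := by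
    conv_rhs => rw [← Complex.norm_mul_exp_arg_mul_I S]
    rw [mul_assoc, ← Complex.exp_add, ← hφ, add_neg_cancel, Complex.exp_zero, mul_one]
  have h4 : ‖S‖
      = ∑ k, ((starRingEnd ℂ) (b k * Complex.exp ((φ:ℂ) * Complex.I)) * xs k).re := by
    rw [← hsum xs, ← hSdef]
    rw [← habs]
    simp
  have hexp1 : ‖Complex.exp (-((φ:ℂ) * Complex.I))‖ = 1 := by
    rw [show -((φ:ℂ) * Complex.I) = ((-φ : ℝ) : ℂ) * Complex.I by push_cast; ring,
      Complex.norm_exp_ofReal_mul_I]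
  have hkey : xs = xphi b φ := by
    by_contra hne
    obtain ⟨j, hj⟩ : ∃ j, xs j ≠ xphi b φ j := by
      by_contra h; push_neg at h; exact hne (funext h)
    have hlt : ∑ k, ((starRingEnd ℂ) (b k * Complex.exp ((φ:ℂ) * Complex.I)) * xs k).re
        < ∑ k, ((starRingEnd ℂ) (b k * Complex.exp ((φ:ℂ) * Complex.I)) * xphi b φ k).re := by
      refine Finset.sum_lt_sum (fun k _ => key_le _ _ (hxs k)) ⟨j, Finset.mem_univ j, ?_⟩
      exact key_lt _ _ (hnd j).1 (hnd j).2 (hxs j) hj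
    have h2 : ∑ k, ((starRingEnd ℂ) (b k * Complex.exp ((φ:ℂ) * Complex.I)) * xphi b φ k).re
        ≤ ‖∑ k, (starRingEnd ℂ) (b k) * xphi b φ k‖ := by
      rw [← hsum (xphi b φ)]
      calc ((∑ k, (starRingEnd ℂ) (b k) * xphi b φ k) * Complex.exp (-((φ:ℂ) * Complex.I))).re
          ≤ ‖(∑ k, (starRingEnd ℂ) (b k) * xphi b φ k)
              * Complex.exp (-((φ:ℂ) * Complex.I))‖ := Complex.re_le_norm _
        _ = ‖∑ k, (starRingEnd ℂ) (b k) * xphi b φ k‖ := by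
            rw [norm_mul, hexp1, mul_one]
    have h3 := hmax (xphi b φ) (xphi_mem b φ)
    linarith
  exact ⟨hkey, ⟨φ, hnd, hkey⟩⟩
end

section
/- Let t ∈ ℂ with |t| = 1. Then the function φ ↦ Re(e^{−iφ}·conj(t)·(1/√2)·sign(t·e^{iφ})), which is defined for all but finitely many φ in [0, 2π], satisfies ∫_0^{2π} Re(e^{−iφ}·conj(t)·(1/√2)·sign(t·e^{iφ})) dφ = 4√2. -/
lemma sgn_mul_self (x : ℝ) : sgn x * x = |x| := by
  unfold sgn
  split
  · rw [abs_of_pos ‹_›, one_mul]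
  · rw [abs_of_nonpos (not_lt.mp ‹_›)]; ring

noncomputable def g (ψ : ℝ) : ℝ := (1 / Real.sqrt 2) * (|Real.cos ψ| + |Real.sin ψ|)

lemma g_periodic : Function.Periodic g (2 * Real.pi) := by
  intro x
  unfold g
  rw [Real.cos_add_two_pi, Real.sin_add_two_pi]

lemma key (ψ : ℝ) :
    (Complex.exp (-(ψ : ℂ) * Complex.I) *
      (((1 / Real.sqrt 2 : ℝ) : ℂ) * csign (Complex.exp ((ψ : ℂ) * Complex.I)))).re = g ψ := by
  have h1 : (Complex.exp ((ψ : ℂ) * Complex.I)).re = Real.cos ψ := by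
    simp [Complex.exp_ofReal_mul_I_re]
  have h2 : (Complex.exp ((ψ : ℂ) * Complex.I)).im = Real.sin ψ := by
    simp [Complex.exp_ofReal_mul_I_im]
  have h3 : -(ψ : ℂ) * Complex.I = ((-ψ : ℝ) : ℂ) * Complex.I := by push_cast; ring
  have hre : (Complex.exp (-(ψ : ℂ) * Complex.I)).re = Real.cos ψ := by
    rw [h3, Complex.exp_ofReal_mul_I_re, Real.cos_neg]
  have him : (Complex.exp (-(ψ : ℂ) * Complex.I)).im = -Real.sin ψ := by
    rw [h3, Complex.exp_ofReal_mul_I_im, Real.sin_neg]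
  unfold csign
  rw [h1, h2]
  simp only [Complex.mul_re, Complex.mul_im, Complex.add_re, Complex.add_im,
    Complex.I_re, Complex.I_im, Complex.ofReal_re, Complex.ofReal_im, hre, him, g]
  rw [← sgn_mul_self (Real.cos ψ), ← sgn_mul_self (Real.sin ψ)]
  ring

lemma integral_abs_sin : ∫ x in (0:ℝ)..(2*Real.pi), |Real.sin x| = 4 := by
  have h1 : ∫ x in (0:ℝ)..Real.pi, |Real.sin x| = 2 := by
    rw [intervalIntegral.integral_congr (g := Real.sin)
      (fun x hx => by
        rw [Set.uIcc_of_le Real.pi_pos.le] at hx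
        exact abs_of_nonneg (Real.sin_nonneg_of_nonneg_of_le_pi hx.1 hx.2))]
    simp [integral_sin]
    norm_num
  have h2 : ∫ x in Real.pi..(2*Real.pi), |Real.sin x| = 2 := by
    rw [intervalIntegral.integral_congr (g := fun x => -Real.sin x)
      (fun x hx => by
        rw [Set.uIcc_of_le (by linarith [Real.pi_pos])] at hx
        rw [abs_of_nonpos]
        rw [← Real.sin_sub_two_pi]
        exact Real.sin_nonpos_of_nonpos_of_neg_pi_le (by linarith [hx.2]) (by linarith [hx.1]))]
    rw [intervalIntegral.integral_neg, integral_sin, Real.cos_two_pi, Real.cos_pi]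
    ring
  rw [← intervalIntegral.integral_add_adjacent_intervals (b := Real.pi)
    ((Real.continuous_sin.abs).intervalIntegrable _ _)
    ((Real.continuous_sin.abs).intervalIntegrable _ _), h1, h2]
  norm_num

lemma integral_abs_cos : ∫ x in (0:ℝ)..(2*Real.pi), |Real.cos x| = 4 := by
  have hper : Function.Periodic (fun x => |Real.sin x|) (2 * Real.pi) := by
    intro x; simp [Real.sin_add_two_pi]
  calc ∫ x in (0:ℝ)..(2*Real.pi), |Real.cos x|
      = ∫ x in (0:ℝ)..(2*Real.pi), |Real.sin (x + Real.pi/2)| := by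
        congr 1; ext x; rw [Real.sin_add_pi_div_two]
    _ = ∫ x in (Real.pi/2)..(2*Real.pi 
        + Real.pi/2), |Real.sin x| := by
        rw [intervalIntegral.integral_comp_add_right (fun x => |Real.sin x|)]
        norm_num
    _ = 4 := by
        have := hper.intervalIntegral_add_eq (Real.pi/2) 0
        simp only [zero_add] at this
        rw [show Real.pi/2 + 2*Real.pi = 2*Real.pi + Real.pi/2 by ring] at this
        rw [this, integral_abs_sin]

lemma integral_g : ∫ x in (0:ℝ)..(2*Real.pi), g x = 4 * Real.sqrt 2 := by
  unfold g
  rw [intervalIntegral.integral_const_mul,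
    intervalIntegral.integral_add ((Real.continuous_cos.abs).intervalIntegrable _ _)
      ((Real.continuous_sin.abs).intervalIntegrable _ _),
    integral_abs_cos, integral_abs_sin]
  have h2 : Real.sqrt 2 * Real.sqrt 2 = 2 := Real.mul_self_sqrt (by norm_num)
  have hpos : Real.sqrt 2 ≠ 0 := by positivity
  field_simp
  linarith [h2]

/-- For unit-modulus `t`, the average over a full period of the aligned real part of the
one-bit sign of `t·e^{iφ}` gives `∫_0^{2π} Re(e^{−iφ}·conj(t)·(1/√2)·sign(t e^{iφ})) dφ = 4√2`. -/
theorem integral_aligned_csign (t : ℂ) (ht : ‖t‖ = 1) :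
    ∫ φ in (0 : ℝ)..(2 * Real.pi),
      (Complex.exp (-(φ : ℂ) * Complex.I) * (starRingEnd ℂ) t *
        (((1 / Real.sqrt 2 : ℝ) : ℂ) * csign (t * Complex.exp (φ * Complex.I)))).re
      = 4 * Real.sqrt 2 := by
  set θ := t.arg with hθ
  have htexp : t = Complex.exp ((θ : ℂ) * Complex.I) := by
    conv_lhs => rw [← Complex.norm_mul_exp_arg_mul_I t]
    rw [ht, Complex.ofReal_one, one_mul]
  have hpt : ∀ φ : ℝ,
      (Complex.exp (-(φ : ℂ) * Complex.I) * (starRingEnd ℂ) t *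
        (((1 / Real.sqrt 2 : ℝ) : ℂ) * csign (t * Complex.exp (φ * Complex.I)))).re
      = g (θ + φ) := by
    intro φ
    have e1 : Complex.exp (-(φ : ℂ) * Complex.I) * (starRingEnd ℂ) t
        = Complex.exp (-((θ + φ : ℝ) : ℂ) * Complex.I) := by
      rw [htexp, ← Complex.exp_conj]
      rw [← Complex.exp_add]
      congr 1
      rw [map_mul, Complex.conj_ofReal, Complex.conj_I]
      push_cast; ring
    have e2 : t * Complex.exp ((φ : ℂ) * Complex.I)
        = Complex.exp (((θ + φ : ℝ) : ℂ) * Complex.I) := by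
      rw [htexp, ← Complex.exp_add]
      congr 1
      push_cast; ring
    rw [e2, ← mul_assoc, e1]
    rw [mul_assoc]
    exact key _
  rw [intervalIntegral.integral_congr (g := fun φ => g (θ + φ)) (fun x _ => hpt x)]
  rw [intervalIntegral.integral_comp_add_left g θ]
  have := g_periodic.intervalIntegral_add_eq θ 0
  simp only [zero_add] at this
  simp only [add_zero]
  rw [this, integral_g]
end
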